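/- Let v be a finite type invariant of degree ≤ 1 and let w be any signed word with n letters. Then v(w) = v(φ) + n·(v(AA) − v(φ)), where AA denotes the one-letter positive signed word. -/

import Mathlib

/-- Letters are indexed by natural numbers; a signed letter carries a sign
(`true` = `+`, `false` = `−`). -/
abbrev Letter : Type := ℕ × Bool

/-- A signed word: every entry occurs exactly twice, and the two occurrences of
any letter carry the same sign. -/
def IsSignedWord (w : List Letter) : Prop :=
  ∀ p ∈ w, w.count p = 2 ∧ ∀ q ∈ w, q.1 = p.1 → q.2 = p.2

/-- Signed words (concrete representatives; isomorphism is subsumed by cyclic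
equivalence below). -/
def SignedWord : Type := {w : List Letter // IsSignedWord w}

/-- The set of letters occurring in a list of signed letters. -/
def lettersL (w : List Letter) : Finset ℕ := (w.map Prod.fst).toFinset

/-- The set of letters of a signed word. -/
def SignedWord.letters (w : SignedWord) : Finset ℕ := lettersL w.1

/-- The number of (distinct) letters of a signed word. -/
def SignedWord.numLetters (w : SignedWord) : ℕ := w.letters.card

theorem isSignedWord_filter (q : ℕ → Bool) {w : List Letter} (hw : IsSignedWord w) :
    IsSignedWord (w.filter fun p => q p.1) := by
  intro p hp
  rw [List.mem_filter] at hp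
  refine ⟨?_, fun r hr => (hw p hp.1).2 r (List.mem_filter.mp hr).1⟩
  rw [List.count_filter (p := fun r : Letter => q r.1) hp.2]
  exact (hw p hp.1).1

/-- Delete both occurrences of every letter of `T` from `w`. -/
def SignedWord.delete (w : SignedWord) (T : Finset ℕ) : SignedWord :=
  ⟨w.1.filter fun p => decide (p.1 ∉ T), isSignedWord_filter (fun a => decide (a ∉ T)) w.2⟩

/-- The induced signed subword of `w` on a set `U` of letters. -/
def SignedWord.restrict (w : SignedWord) (U : Finset ℕ) : SignedWord :=
  ⟨w.1.filter fun p => decide (p.1 ∈ U), isSignedWord_filter (fun a => decide (a ∈ U)) w.2⟩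

/-- Sign-preserving relabeling of letters. -/
def Iso (w w' : List Letter) : Prop :=
  ∃ f : ℕ ≃ ℕ, w' = w.map fun p => (f p.1, p.2)

/-- The basic move `A^ε x A^ε y ↦ x A^(−ε) y A^(−ε)`. -/
def Move (w w' : List Letter) : Prop :=
  ∃ (a : ℕ) (s : Bool) (x y : List Letter),
    w = (a, s) :: (x ++ (a, s) :: y) ∧ w' = x ++ (a, !s) :: (y ++ [(a, !s)])

/-- Cyclic equivalence of signed words: the equivalence relation generated by
isomorphism together with the basic move. -/
def CyclicEquivL : List Letter → List Letter → Prop :=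
  Relation.EqvGen fun w w' => Iso w w' ∨ Move w w'

/-- Cyclic equivalence of signed words. -/
def SignedWord.CyclicEquiv (w w' : SignedWord) : Prop := CyclicEquivL w.1 w'.1

/-- A cyclic equivalence invariant with values in `F`. -/
def WordInvariant (F : Type*) [Field F] (v : SignedWord → F) : Prop :=
  ∀ w w' : SignedWord, w.CyclicEquiv w' → v w = v w'

/-- The prolongation of `v` to the singular signed word `(w, S)` (the letters of
`S` being declared singular), given by inclusion–exclusion. -/
def prolong (F : Type*) [Field F] (v : SignedWord → F) (w : SignedWord) (S : Finset ℕ) : F :=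
  ∑ T ∈ S.powerset, (-1 : F) ^ T.card * v (w.delete T)

/-- `v` is a finite type invariant of degree ≤ `n`: it is a cyclic equivalence
invariant whose prolongation vanishes on every singular signed word with more
than `n` singular letters. -/
def FiniteTypeLe (F : Type*) [Field F] (n : ℕ) (v : SignedWord → F) : Prop :=
  WordInvariant F v ∧
    ∀ (w : SignedWord) (S : Finset ℕ), S ⊆ w.letters → n < S.card →
      prolong F v w S = 0

/-- The empty signed word `φ`. -/
def wordEmpty : SignedWord := ⟨[], by intro p hp; simp at hp⟩

/-- The one-letter positive signed word `AA`. -/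
def wordAA : SignedWord := ⟨[(0, true), (0, true)], by unfold IsSignedWord; decide⟩

/-- The one-letter negative signed word `ĀĀ`. -/
def wordAAneg : SignedWord := ⟨[(0, false), (0, false)], by unfold IsSignedWord; decide⟩

/-- The two-letter signed word `AABB`. -/
def wordAABB : SignedWord := ⟨[(0, true), (0, true), (1, true), (1, true)], by unfold IsSignedWord; decide⟩

/-- The two-letter signed word `AAB̄B̄`. -/
def wordAABnBn : SignedWord := ⟨[(0, true), (0, true), (1, false), (1, false)], by unfold IsSignedWord; decide⟩

/-- The two-letter signed word `AB̄B̄A`. -/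
def wordABnBnA : SignedWord := ⟨[(0, true), (1, false), (1, false), (0, true)], by unfold IsSignedWord; decide⟩

/-- The two-letter signed word `ABAB`. -/
def wordABAB : SignedWord := ⟨[(0, true), (1, true), (0, true), (1, true)], by unfold IsSignedWord; decide⟩

/-- The underlying list of the word `A₁A₁A₂A₂…AₙAₙ` (all letters positive). -/
def wListN (n : ℕ) : List Letter := (List.range n).flatMap fun i => [(i, true), (i, true)]

/-- `Ncount u w`: the number of `k`-element subsets of the letters of `w`
(`k` = number of letters of `u`) whose induced signed subword is cyclically
equivalent to (an isomorphic copy of) `u`. -/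
noncomputable def Ncount (u w : SignedWord) : ℕ := by
  classical
  exact (w.letters.powerset.filter fun U =>
    U.card = u.numLetters ∧ (w.restrict U).CyclicEquiv u).card

theorem prolong_add (F : Type*) [Field F] (v₁ v₂ : SignedWord → F) (w : SignedWord) (S : Finset ℕ) :
    prolong F (v₁ + v₂) w S = prolong F v₁ w S + prolong F v₂ w S := by
  simp [prolong, ← Finset.sum_add_distrib, mul_add]

theorem prolong_smul (F : Type*) [Field F] (c : F) (v : SignedWord → F) (w : SignedWord) (S : Finset ℕ) :
    prolong F (c • v) w S = c * prolong F v w S := by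
  rw [prolong, prolong, Finset.mul_sum]
  exact Finset.sum_congr rfl fun T _ => by simp [mul_left_comm]

/-- The `F`-vector space `Vₙ` of finite type invariants of degree ≤ `n`. -/
def Vn (F : Type*) [Field F] (n : ℕ) : Submodule F (SignedWord → F) where
  carrier := {v | FiniteTypeLe F n v}
  add_mem' := by
    rintro v₁ v₂ ⟨h1, h1'⟩ ⟨h2, h2'⟩
    refine ⟨fun w w' h => by simp [h1 w w' h, h2 w w' h], fun w S hS hc => ?_⟩
    rw [prolong_add, h1' w S hS hc, h2' w S hS hc, add_zero]
  zero_mem' := ⟨fun _ _ _ => rfl, fun w S hS hc => by simp [prolong]⟩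
  smul_mem' := by
    rintro c v ⟨h, h'⟩
    refine ⟨fun w w' hww => by simp [h w w' hww], fun w S hS hc => ?_⟩
    rw [prolong_smul, h' w S hS hc, mul_zero]

/-- Cyclic equivalence as a setoid on signed words. -/
def cycSetoid : Setoid SignedWord :=
  ⟨SignedWord.CyclicEquiv, fun w => Relation.EqvGen.refl w.1,
    fun h => Relation.EqvGen.symm _ _ h, fun h h' => Relation.EqvGen.trans _ _ _ h h'⟩



section AuxProof

lemma mem_lettersL {w : List Letter} {a : ℕ} : a ∈ lettersL w ↔ ∃ p ∈ w, p.1 = a := by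
  simp [lettersL]

lemma delete_empty (w : SignedWord) : w.delete ∅ = w := by
  apply Subtype.ext
  simp [SignedWord.delete]

lemma delete_delete (w : SignedWord) (T T' : Finset ℕ) :
    (w.delete T).delete T' = w.delete (T ∪ T') := by
  apply Subtype.ext
  show (w.1.filter _).filter _ = w.1.filter _
  rw [List.filter_filter]
  apply List.filter_congr
  intro p _
  simp only [Finset.mem_union, not_or, Bool.decide_and]
  exact Bool.and_comm _ _

lemma letters_delete (w : SignedWord) (T : Finset ℕ) :
    (w.delete T).letters = w.letters \ T := by
  ext x
  simp only [SignedWord.letters, SignedWord.delete, mem_lettersL, Finset.mem_sdiff,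
    List.mem_filter, decide_eq_true_eq]
  constructor
  · rintro ⟨p, ⟨hp, hpT⟩, rfl⟩
    exact ⟨⟨p, hp, rfl⟩, hpT⟩
  · rintro ⟨⟨p, hp, rfl⟩, hxT⟩
    exact ⟨p, ⟨hp, hxT⟩, rfl⟩

lemma delete_letters (w : SignedWord) : w.delete w.letters = wordEmpty := by
  apply Subtype.ext
  show w.1.filter _ = []
  rw [List.filter_eq_nil_iff]
  intro p hp
  simp only [decide_eq_true_eq, not_not]
  exact mem_lettersL.mpr ⟨p, hp, rfl⟩

lemma restrict_single (w : SignedWord) {a : ℕ} (ha : a ∈ w.letters) :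
    ∃ s, (w.restrict {a}).1 = [(a, s), (a, s)] := by
  obtain ⟨p, hp, hpa⟩ := mem_lettersL.mp ha
  refine ⟨p.2, ?_⟩
  have hq : ∀ q ∈ w.1, q.1 = a → q = (a, p.2) := by
    intro q hqm hqa
    have h2 := (w.2 p hp).2 q hqm (by rw [hqa, hpa])
    exact Prod.ext hqa h2
  have h1 : (w.restrict {a}).1 = w.1.filter (· == (a, p.2)) := by
    apply List.filter_congr
    intro q hqm
    simp only [Finset.mem_singleton, beq_eq_decide, decide_eq_decide]
    exact ⟨fun h => hq q hqm h, fun h => by rw [h]⟩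
  have hc : w.1.count (a, p.2) = 2 := by
    have h3 := (w.2 p hp).1
    rwa [show p = (a, p.2) from Prod.ext hpa rfl] at h3
  rw [h1, List.filter_beq, hc]
  rfl

lemma pair_equiv (a : ℕ) (s : Bool) : CyclicEquivL [(a, s), (a, s)] wordAA.1 := by
  have iso : ∀ (t : Bool), CyclicEquivL [(a, t), (a, t)] [(0, t), (0, t)] := by
    intro t
    apply Relation.EqvGen.rel
    left
    exact ⟨Equiv.swap a 0, by simp [Equiv.swap_apply_left]⟩
  cases s with
  | true => exact iso true
  | false =>
    refine Relation.EqvGen.trans _ _ _ (iso false) ?_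
    apply Relation.EqvGen.symm
    apply Relation.EqvGen.rel
    right
    exact ⟨0, true, [], [], rfl, rfl⟩

lemma prolong_pair {F : Type*} [Field F] (v : SignedWord → F) (u : SignedWord) {a b : ℕ}
    (hab : a ≠ b) :
    prolong F v u {a, b} =
      v u - v (u.delete {a}) - v (u.delete {b}) + v (u.delete {a, b}) := by
  have ha : a ∉ ({b} : Finset ℕ) := Finset.notMem_singleton.mpr hab
  have hpb : ({b} : Finset ℕ).powerset = {∅, {b}} := by
    ext t
    simp [Finset.subset_singleton_iff]
  rw [prolong, show ({a, b} : Finset ℕ) = insert a {b} from rfl,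
    Finset.sum_powerset_insert ha, hpb]
  rw [Finset.sum_insert (by simp [(Finset.singleton_ne_empty b).symm]), Finset.sum_insert (by simp [(Finset.singleton_ne_empty b).symm]),
    Finset.sum_singleton, Finset.sum_singleton]
  have h2 : (insert a {b} : Finset ℕ).card = 2 := by
    rw [Finset.card_insert_of_notMem ha, Finset.card_singleton]
  simp only [Finset.card_empty, pow_zero, one_mul, Finset.card_singleton, pow_one,
    delete_empty, insert_empty_eq, h2]
  ring

lemma diff_const {F : Type*} [Field F] (v : SignedWord → F) (hv : FiniteTypeLe F 1 v)
    (w : SignedWord) {a : ℕ} (ha : a ∈ w.letters) :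
    ∀ T : Finset ℕ, T ⊆ w.letters \ {a} →
      v (w.delete T) - v (w.delete (insert a T)) = v w - v (w.delete {a}) := by
  intro T
  induction T using Finset.induction_on with
  | empty =>
    intro _
    rw [delete_empty]
    simp
  | @insert b T hbT ih =>
    intro hsub
    have hbm : b ∈ w.letters \ {a} := hsub (Finset.mem_insert_self b T)
    have hTsub : T ⊆ w.letters \ {a} := (Finset.insert_subset_iff.mp hsub).2
    have hba : b ≠ a := by
      have h := (Finset.mem_sdiff.mp hbm).2
      simpa using h
    have haT : a ∉ T := fun h => by simpa using (Finset.mem_sdiff.mp (hTsub h)).2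
    have hS : ({a, b} : Finset ℕ) ⊆ (w.delete T).letters := by
      rw [letters_delete]
      intro x hx
      rcases Finset.mem_insert.mp hx with rfl | hx
      · exact Finset.mem_sdiff.mpr ⟨ha, haT⟩
      · rw [Finset.mem_singleton] at hx
        subst hx
        exact Finset.mem_sdiff.mpr ⟨(Finset.mem_sdiff.mp hbm).1, hbT⟩
    have hcard : 1 < ({a, b} : Finset ℕ).card := by
      rw [Finset.card_insert_of_notMem (Finset.notMem_singleton.mpr (Ne.symm hba)),
        Finset.card_singleton]
      exact one_lt_two
    have h0 := hv.2 (w.delete T) {a, b} hS hcard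
    rw [prolong_pair v _ (Ne.symm hba)] at h0
    rw [delete_delete, delete_delete, delete_delete] at h0
    have e1 : T ∪ {a} = insert a T := by ext x; simp [or_comm]
    have e2 : T ∪ {b} = insert b T := by ext x; simp [or_comm]
    have e3 : T ∪ {a, b} = insert a (insert b T) := by
      ext x
      simp only [Finset.mem_union, Finset.mem_insert, Finset.mem_singleton]
      tauto
    rw [e1, e2, e3] at h0
    have key : v (w.delete (insert b T)) - v (w.delete (insert a (insert b T))) =
        v (w.delete T) - v (w.delete (insert a T)) := by linear_combination -h0
    rw [key]
    exact ih hTsub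

end AuxProof

/-- a finite type invariant of degree ≤ 1 satisfies
`v(w) = v(φ) + n·(v(AA) − v(φ))` where `n` is the number of letters of `w`. -/
theorem finiteTypeLe_one_value (F : Type*) [Field F] (v : SignedWord → F)
    (hv : FiniteTypeLe F 1 v) (w : SignedWord) :
    v w = v wordEmpty + (w.numLetters : F) * (v wordAA - v wordEmpty) := by
  suffices h : ∀ (n : ℕ) (u : SignedWord), u.numLetters = n →
      v u = v wordEmpty + (n : F) * (v wordAA - v wordEmpty) from h w.numLetters w rfl
  intro n
  induction n with
  | zero =>
    intro u hu
    have hL : u.letters = ∅ := Finset.card_eq_zero.mp hu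
    have hun : u = wordEmpty := by
      apply Subtype.ext
      cases h : u.1 with
      | nil => rfl
      | cons p l =>
        exfalso
        have hp : p.1 ∈ u.letters :=
          mem_lettersL.mpr ⟨p, by rw [h]; exact List.mem_cons_self (a := p) (l := l), rfl⟩
        rw [hL] at hp
        simp at hp
    rw [hun]
    simp
  | succ n ih =>
    intro u hu
    obtain ⟨a, ha⟩ : u.letters.Nonempty := by
      apply Finset.card_pos.mp
      rw [show u.letters.card = u.numLetters from rfl, hu]
      omega
    have key := diff_const v hv u ha (u.letters \ {a}) (Finset.Subset.refl _)
    rw [← Finset.erase_eq, Finset.insert_erase ha, delete_letters, Finset.erase_eq] at key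
    have hrest : u.delete (u.letters \ {a}) = u.restrict {a} := by
      apply Subtype.ext
      apply List.filter_congr
      intro p hp
      have hpL : p.1 ∈ u.letters := mem_lettersL.mpr ⟨p, hp, rfl⟩
      simp only [Finset.mem_sdiff, Finset.mem_singleton, decide_eq_decide, not_and, not_not]
      exact ⟨fun h => h hpL, fun h _ => h⟩
    obtain ⟨s, hs⟩ := restrict_single u ha
    have hAA : v (u.restrict {a}) = v wordAA := by
      apply hv.1
      show CyclicEquivL _ _
      rw [hs]
      exact pair_equiv a s
    have hdel : (u.delete {a}).numLetters = n := by
      have h1 : (u.delete {a}).letters = u.letters \ {a} := letters_delete u {a}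
      have hc : u.letters.card = n + 1 := hu
      rw [SignedWord.numLetters, h1, ← Finset.erase_eq, Finset.card_erase_of_mem ha, hc]
      omega
    have hv_del := ih (u.delete {a}) hdel
    rw [hrest, hAA] at key
    push_cast
    linear_combination hv_del - key
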